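/- The equation 3(1-r) log(1/(1-r)) - 2r = 0 has a unique root R in (0,1), and 3(1-r) log(1/(1-r)) - 2r > 0 for 0 < r < R while 3(1-r) log(1/(1-r)) - 2r < 0 for R < r < 1. -/

import Mathlib

theorem stmt_7 :
    ∃ R : ℝ, R ∈ Set.Ioo (0 : ℝ) 1
      ∧ 3 * (1 - R) * Real.log (1 / (1 - R)) - 2 * R = 0
      ∧ (∀ r : ℝ, 0 < r → r < R → 0 < 3 * (1 - r) * Real.log (1 / (1 - r)) - 2 * r)
      ∧ (∀ r : ℝ, R < r → r < 1 → 3 * (1 - r) * Real.log (1 / (1 - r)) - 2 * r < 0)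
      ∧ ∀ r ∈ Set.Ioo (0 : ℝ) 1,
          3 * (1 - r) * Real.log (1 / (1 - r)) - 2 * r = 0 → r = R := by
  set g : ℝ → ℝ := fun r => -3 * ((1 - r) * Real.log (1 - r)) - 2 * r with hg
  have hfg : ∀ r : ℝ, 3 * (1 - r) * Real.log (1 / (1 - r)) - 2 * r = g r := by
    intro r
    simp only [hg, one_div, Real.log_inv]
    ring
  have hcont : Continuous g := by
    have h1 : Continuous fun r : ℝ => (1 - r) * Real.log (1 - r) :=
      Real.continuous_mul_log.comp (continuous_const.sub continuous_id)
    exact ((continuous_const.mul h1).sub (continuous_const.mul continuous_id))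
  have hd : ∀ r : ℝ, r ≠ 1 → HasDerivAt g (3 * Real.log (1 - r) + 1) r := by
    intro r hr
    have h1 : (1 : ℝ) - r ≠ 0 := fun h => hr (by linarith)
    have hlin : HasDerivAt (fun x : ℝ => 1 - x) (-1) r := (hasDerivAt_id r).const_sub 1
    have hlog : HasDerivAt (fun x : ℝ => Real.log (1 - x)) ((1 - r)⁻¹ * (-1)) r :=
      (Real.hasDerivAt_log h1).comp r hlin
    have hmul : HasDerivAt (fun x : ℝ => (1 - x) * Real.log (1 - x))
        ((-1) * Real.log (1 - r) + (1 - r) * ((1 - r)⁻¹ * (-1))) r := hlin.mul hlog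
    have := (hmul.const_mul (-3)).sub ((hasDerivAt_id r).const_mul 2)
    refine this.congr_deriv ?_
    field_simp
    ring
  have hderiv : ∀ r ∈ Set.Ioo (0 : ℝ) 1, deriv g r = 3 * Real.log (1 - r) + 1 := by
    intro r hr
    exact (hd r hr.2.ne).deriv
  have hanti : StrictAntiOn (deriv g) (interior (Set.Icc (0 : ℝ) 1)) := by
    rw [interior_Icc]
    intro x hx y hy hxy
    rw [hderiv x hx, hderiv y hy]
    have : Real.log (1 - y) < Real.log (1 - x) :=
      Real.log_lt_log (by linarith [hy.2]) (by linarith)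
    linarith
  have hconc : StrictConcaveOn ℝ (Set.Icc (0 : ℝ) 1) g :=
    hanti.strictConcaveOn_of_deriv (convex_Icc 0 1) hcont.continuousOn
  have hg0 : g 0 = 0 := by simp [hg]
  have hg1 : g 1 = -2 := by simp [hg]
  have hghalf : 0 < g (1/2) := by
    have h2 : (1 : ℝ) - 1/2 = 2⁻¹ := by norm_num
    have hl2 : (0.6931471803 : ℝ) < Real.log 2 := Real.log_two_gt_d9
    simp only [hg, h2, Real.log_inv]
    norm_num
    nlinarith
  -- IVT on [1/2, 1]
  have hsub := intermediate_value_Ioo' (by norm_num : (1:ℝ)/2 ≤ 1) hcont.continuousOn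
  have h0mem : (0 : ℝ) ∈ Set.Ioo (g 1) (g (1/2)) := by
    rw [hg1]; exact ⟨by norm_num, hghalf⟩
  obtain ⟨R, hRmem, hgR⟩ := hsub h0mem
  have hR0 : 0 < R := lt_trans (by norm_num) hRmem.1
  have hR1 : R < 1 := hRmem.2
  -- positivity on (0, R)
  have hpos : ∀ r : ℝ, 0 < r → r < R → 0 < g r := by
    intro r hr0 hrR
    have ha : 0 < (R - r) / R := div_pos (by linarith) hR0
    have hb : 0 < r / R := div_pos hr0 hR0
    have habs : (R - r) / R + r / R = 1 := by field_simp; ring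
    have := hconc.2 (Set.mem_Icc.2 ⟨le_refl 0, by norm_num⟩)
      (Set.mem_Icc.2 ⟨hR0.le, hR1.le⟩) hR0.ne ha hb habs
    have hcomb : ((R - r) / R) • (0:ℝ) + (r / R) • R = r := by
      simp only [smul_eq_mul]; field_simp; ring
    rw [hcomb, hg0, hgR] at this
    simpa using this
  -- negativity on (R, 1)
  have hneg : ∀ r : ℝ, R < r → r < 1 → g r < 0 := by
    intro r hRr hr1
    have hhalfR : (1:ℝ)/2 < R := hRmem.1
    have ha : 0 < (r - R) / (r - 1/2) := div_pos (by linarith) (by linarith)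
    have hb : 0 < (R - 1/2) / (r - 1/2) := div_pos (by linarith) (by linarith)
    have h12 : r - 1/2 ≠ 0 := by linarith
    have habs : (r - R) / (r - 1/2) + (R - 1/2) / (r - 1/2) = 1 := by
      rw [← add_div, div_eq_one_iff_eq h12]; ring
    have hne : (1:ℝ)/2 ≠ r := by linarith
    have := hconc.2 (Set.mem_Icc.2 ⟨by norm_num, by linarith⟩)
      (Set.mem_Icc.2 ⟨by linarith, hr1.le⟩) hne ha hb habs
    have hcomb : ((r - R) / (r - 1/2)) • ((1:ℝ)/2) + ((R - 1/2) / (r - 1/2)) • r = R := by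
      simp only [smul_eq_mul]
      rw [div_mul_eq_mul_div, div_mul_eq_mul_div, ← add_div, div_eq_iff h12]
      ring
    rw [hcomb, hgR] at this
    simp only [smul_eq_mul] at this
    by_contra hcon
    push_neg at hcon
    have h1 : 0 < (r - R) / (r - 1/2) * g (1/2) := mul_pos ha hghalf
    have h2 : 0 ≤ (R - 1/2) / (r - 1/2) * g r := mul_nonneg hb.le hcon
    linarith
  refine ⟨R, ⟨hR0, hR1⟩, ?_, ?_, ?_, ?_⟩
  · rw [hfg]; exact hgR
  · intro r h1 h2; rw [hfg]; exact hpos r h1 h2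
  · intro r h1 h2; rw [hfg]; exact hneg r h1 h2
  · intro r hr hroot
    rw [hfg] at hroot
    rcases lt_trichotomy r R with h | h | h
    · exact absurd hroot (ne_of_gt (hpos r hr.1 h))
    · exact h
    · exact absurd hroot (ne_of_lt (hneg r h hr.2))
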